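/- arXiv:2103.14821 — 7 statements merged into one kernel-verified Lean document; each statement's English description precedes it below -/
import Mathlib

section
/- Let x : ℝ → ℝ² be differentiable and satisfy the nonlinear system dynamics ẋ(t) = g₁(x(t)) + g₂(x(t))·u(t) + z·d(t), where g₁, g₂ : ℝ² → ℝ², u, d : ℝ → ℝ, and z ∈ ℝ². Let l_p ∈ ℝ² with ⟨l_p, z⟩ a scalar, let p : ℝ → ℝ be differentiable and satisfy the basic nonlinear disturbance observer dynamics ṗ(t) = −⟨l_p,z⟩·p(t) − (⟨l_p,z⟩·⟨l_p,x(t)⟩ + ⟨l_p, g₁(x(t)) + g₂(x(t))·u(t)⟩), and define the estimated disturbance d̂(t) = p(t) + ⟨l_p, x(t)⟩. Then the estimate satisfies d̂'(t) = ⟨l_p,z⟩·(d(t) − d̂(t)) for all t; consequently, if d is differentiable, the disturbance error e_d(t) = d(t) − d̂(t) satisfies e_d'(t) = −⟨l_p,z⟩·e_d(t) + d'(t). -/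
open scoped RealInnerProductSpace

/-- BNDO estimate dynamics.  For a system
`ẋ = g₁(x) + g₂(x)·u + z·d` and observer
`ṗ = −⟨l_p,z⟩p − (⟨l_p,z⟩⟨l_p,x⟩ + ⟨l_p, g₁(x)+g₂(x)u⟩)`, the estimate
`d̂ = p + ⟨l_p,x⟩` satisfies `d̂' = ⟨l_p,z⟩(d − d̂)`, and if `d` is
differentiable then the error `e_d = d − d̂` satisfies
`e_d' = −⟨l_p,z⟩ e_d + d'`. -/
theorem bndo_estimate_dynamics
    (x : ℝ → EuclideanSpace ℝ (Fin 2)) (g₁ g₂ : EuclideanSpace ℝ (Fin 2) → EuclideanSpace ℝ (Fin 2))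
    (u d : ℝ → ℝ) (z l_p : EuclideanSpace ℝ (Fin 2)) (p : ℝ → ℝ)
    (hx : ∀ t, HasDerivAt x (g₁ (x t) + u t • g₂ (x t) + d t • z) t)
    (hp : ∀ t, HasDerivAt p
      (-(⟪l_p, z⟫ : ℝ) * p t -
        ((⟪l_p, z⟫ : ℝ) * (⟪l_p, x t⟫ : ℝ) + (⟪l_p, g₁ (x t) + u t • g₂ (x t)⟫ : ℝ))) t) :
    (∀ t, HasDerivAt (fun t => p t + (⟪l_p, x t⟫ : ℝ))
        ((⟪l_p, z⟫ : ℝ) * (d t - (p t + (⟪l_p, x t⟫ : ℝ)))) t) ∧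
    (Differentiable ℝ d →
      ∀ t, HasDerivAt (fun t => d t - (p t + (⟪l_p, x t⟫ : ℝ)))
        (-(⟪l_p, z⟫ : ℝ) * (d t - (p t + (⟪l_p, x t⟫ : ℝ))) + deriv d t) t) := by
  have hinner : ∀ t, HasDerivAt (fun t => (⟪l_p, x t⟫ : ℝ))
      (⟪l_p, g₁ (x t) + u t • g₂ (x t) + d t • z⟫ : ℝ) t := fun t =>
    (innerSL ℝ l_p).hasFDerivAt.comp_hasDerivAt t (hx t)
  have hhat : ∀ t, HasDerivAt (fun t => p t + (⟪l_p, x t⟫ : ℝ))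
      ((⟪l_p, z⟫ : ℝ) * (d t - (p t + (⟪l_p, x t⟫ : ℝ)))) t := by
    intro t
    have := (hp t).add (hinner t)
    convert this using 1
    case e'_9 =>
      simp [inner_add_right, inner_smul_right]
      ring
    all_goals rfl
  refine ⟨hhat, fun hd t => ?_⟩
  have := (hd t).hasDerivAt.sub (hhat t)
  convert this using 1
  case e'_9 => ring
  all_goals rfl
end

section
/- Let ξ, c, σ, φ : ℝ → ℝ be differentiable with σ(t) ≠ 0 and ξ(t) − c(t) ≠ 0 for all t, and let φ(t) be any function (the signal α·sgn(s) of the learning algorithm). Suppose the sliding-mode adaptation rules hold: c'(t) = ξ'(t) + (ξ(t) − c(t))·φ(t) and σ'(t) = −(σ(t) + σ(t)³/(ξ(t) − c(t))²)·φ(t). Define N(t) = (ξ(t) − c(t))/σ(t) and the Gaussian membership value μ(t) = exp(−N(t)²). Then for all t: N(t)·N'(t) = φ(t), μ'(t) = −2·φ(t)·μ(t), and consequently for two such membership values μ₁, μ₂ (each built from its own ξ, c, σ obeying the same rules with the same φ), the firing strength w = μ₁·μ₂ satisfies w'(t) = −4·φ(t)·w(t). -/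
lemma smc_N_hasDeriv
    (φ ξ c σ : ℝ → ℝ)
    (hξ : Differentiable ℝ ξ) (hc : Differentiable ℝ c) (hσ : Differentiable ℝ σ)
    (hσ0 : ∀ t, σ t ≠ 0) (hne : ∀ t, ξ t - c t ≠ 0)
    (hc' : ∀ t, deriv c t = deriv ξ t + (ξ t - c t) * φ t)
    (hσ' : ∀ t, deriv σ t = -(σ t + (σ t) ^ 3 / (ξ t - c t) ^ 2) * φ t) :
    ∀ t, HasDerivAt (fun t => (ξ t - c t) / σ t) (σ t / (ξ t - c t) * φ t) t := by
  intro t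
  have h1 : HasDerivAt (fun t => ξ t - c t) (deriv ξ t - deriv c t) t :=
    ((hξ t).hasDerivAt).sub ((hc t).hasDerivAt)
  have h2 : HasDerivAt σ (deriv σ t) t := (hσ t).hasDerivAt
  have h := h1.div h2 (hσ0 t)
  refine h.congr_deriv ?_
  rw [hc' t, hσ' t]
  have hu := hne t
  have hs := hσ0 t
  set u := ξ t - c t
  set v := σ t
  field_simp
  ring

lemma smc_mu_hasDeriv
    (φ ξ c σ : ℝ → ℝ)
    (hξ : Differentiable ℝ ξ) (hc : Differentiable ℝ c) (hσ : Differentiable ℝ σ)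
    (hσ0 : ∀ t, σ t ≠ 0) (hne : ∀ t, ξ t - c t ≠ 0)
    (hc' : ∀ t, deriv c t = deriv ξ t + (ξ t - c t) * φ t)
    (hσ' : ∀ t, deriv σ t = -(σ t + (σ t) ^ 3 / (ξ t - c t) ^ 2) * φ t) :
    ∀ t, HasDerivAt (fun t => Real.exp (-((ξ t - c t) / σ t) ^ 2))
        (-2 * φ t * Real.exp (-((ξ t - c t) / σ t) ^ 2)) t := by
  intro t
  have hN := smc_N_hasDeriv φ ξ c σ hξ hc hσ hσ0 hne hc' hσ' t
  have hsq : HasDerivAt (fun t => -((ξ t - c t) / σ t) ^ 2)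
      (-(2 * ((ξ t - c t) / σ t) * (σ t / (ξ t - c t) * φ t))) t := by
    exact ((hN.pow 2).neg).congr_deriv (by ring)
  have h := hsq.exp
  convert h using 1
  have h1 := hne t
  have h2 := hσ0 t
  field_simp

/-- under the SMC adaptation rules
`c' = ξ' + (ξ−c)·φ` and `σ' = −(σ + σ³/(ξ−c)²)·φ` (with `φ = α·sgn(s)`),
the normalized argument `N = (ξ−c)/σ` satisfies `N·N' = φ`, the Gaussian
membership value `μ = exp(−N²)` satisfies `μ' = −2·φ·μ`, and the firing
strength `w = μ₁·μ₂` of two such membership values satisfies `w' = −4·φ·w`. -/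
theorem smc_membership_dynamics
    (φ : ℝ → ℝ)
    (ξ₁ c₁ σ₁ ξ₂ c₂ σ₂ : ℝ → ℝ)
    (hξ₁ : Differentiable ℝ ξ₁) (hc₁ : Differentiable ℝ c₁) (hσ₁ : Differentiable ℝ σ₁)
    (hξ₂ : Differentiable ℝ ξ₂) (hc₂ : Differentiable ℝ c₂) (hσ₂ : Differentiable ℝ σ₂)
    (hσ₁0 : ∀ t, σ₁ t ≠ 0) (hne₁ : ∀ t, ξ₁ t - c₁ t ≠ 0)
    (hσ₂0 : ∀ t, σ₂ t ≠ 0) (hne₂ : ∀ t, ξ₂ t - c₂ t ≠ 0)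
    (hc₁' : ∀ t, deriv c₁ t = deriv ξ₁ t + (ξ₁ t - c₁ t) * φ t)
    (hσ₁' : ∀ t, deriv σ₁ t = -(σ₁ t + (σ₁ t) ^ 3 / (ξ₁ t - c₁ t) ^ 2) * φ t)
    (hc₂' : ∀ t, deriv c₂ t = deriv ξ₂ t + (ξ₂ t - c₂ t) * φ t)
    (hσ₂' : ∀ t, deriv σ₂ t = -(σ₂ t + (σ₂ t) ^ 3 / (ξ₂ t - c₂ t) ^ 2) * φ t) :
    (∀ t, ((ξ₁ t - c₁ t) / σ₁ t) * deriv (fun t => (ξ₁ t - c₁ t) / σ₁ t) t = φ t) ∧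
    (∀ t, HasDerivAt (fun t => Real.exp (-((ξ₁ t - c₁ t) / σ₁ t) ^ 2))
        (-2 * φ t * Real.exp (-((ξ₁ t - c₁ t) / σ₁ t) ^ 2)) t) ∧
    (∀ t, HasDerivAt
        (fun t => Real.exp (-((ξ₁ t - c₁ t) / σ₁ t) ^ 2) *
                  Real.exp (-((ξ₂ t - c₂ t) / σ₂ t) ^ 2))
        (-4 * φ t * (Real.exp (-((ξ₁ t - c₁ t) / σ₁ t) ^ 2) *
                     Real.exp (-((ξ₂ t - c₂ t) / σ₂ t) ^ 2))) t) := by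
  have hN₁ := smc_N_hasDeriv φ ξ₁ c₁ σ₁ hξ₁ hc₁ hσ₁ hσ₁0 hne₁ hc₁' hσ₁'
  have hμ₁ := smc_mu_hasDeriv φ ξ₁ c₁ σ₁ hξ₁ hc₁ hσ₁ hσ₁0 hne₁ hc₁' hσ₁'
  have hμ₂ := smc_mu_hasDeriv φ ξ₂ c₂ σ₂ hξ₂ hc₂ hσ₂ hσ₂0 hne₂ hc₂' hσ₂'
  refine ⟨fun t => ?_, hμ₁, fun t => ?_⟩
  · rw [(hN₁ t).deriv]
    have h1 := hne₁ t
    have h2 := hσ₁0 t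
    field_simp
  · have h := (hμ₁ t).mul (hμ₂ t)
    refine h.congr_deriv ?_
    ring
end

section
/- Let K be a finite nonempty index set; let u_k, v_k ∈ (0,1] for k ∈ K with Σ_k u_k = 1 and Σ_k v_k = 1; let f_k, q, α, S ∈ ℝ. Assume D₁ := Σ_k (q·u_k + (1−q)·v_k)² > 0 and D₂ := Σ_k f_k·(u_k − v_k) ≠ 0. Define ḟ_k = −((q·u_k + (1−q)·v_k)/D₁)·α·S and q̇ = −(α·S)/D₂. Then q·Σ_k ḟ_k·u_k + (1−q)·Σ_k ḟ_k·v_k + q̇·Σ_k f_k·(u_k − v_k) + 4αS·[ q·Σ_k f_k·(−u_k + u_k·Σ_l u_l) + (1−q)·Σ_k f_k·(−v_k + v_k·Σ_l v_l) ] = −2·α·S. That is, under the adaptation rules for the consequent parameters f_k and the weighting parameter q, the time derivative of the T2NFS output τ_n = q·Σ_k f_k·u_k + (1−q)·Σ_k f_k·v_k equals −2α·sgn(s). -/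
open scoped BigOperators

/-- algebraic identity behind `τ̇_n = −2α·sgn(s)`.  With normalized
lower/upper firing strengths `u_k, v_k ∈ (0,1]` each summing to `1`, the
adaptation rules for the consequents `f_k` and the weight `q` make the time
derivative of the T2NFS output equal `−2αS`. -/
theorem t2nfs_output_derivative
    {K : Type*} [Fintype K] [Nonempty K]
    (u v f : K → ℝ) (q α S : ℝ)
    (hu : ∀ k, u k ∈ Set.Ioc (0 : ℝ) 1) (hv : ∀ k, v k ∈ Set.Ioc (0 : ℝ) 1)
    (hus : ∑ k, u k = 1) (hvs : ∑ k, v k = 1)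
    (hD₁ : 0 < ∑ k, (q * u k + (1 - q) * v k) ^ 2)
    (hD₂ : ∑ k, f k * (u k - v k) ≠ 0) :
    q * (∑ k, (-((q * u k + (1 - q) * v k) /
            (∑ l, (q * u l + (1 - q) * v l) ^ 2)) * α * S) * u k) +
      (1 - q) * (∑ k, (-((q * u k + (1 - q) * v k) /
            (∑ l, (q * u l + (1 - q) * v l) ^ 2)) * α * S) * v k) +
      (-(α * S) / (∑ k, f k * (u k - v k))) * (∑ k, f k * (u k - v k)) +
      4 * α * S *
        (q * (∑ k, f k * (-(u k) + u k * ∑ l, u l)) +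
          (1 - q) * (∑ k, f k * (-(v k) + v k * ∑ l, v l))) =
      -2 * α * S := by
  have hD₁' : (∑ l, (q * u l + (1 - q) * v l) ^ 2) ≠ 0 := ne_of_gt hD₁
  set D₁ := ∑ l, (q * u l + (1 - q) * v l) ^ 2 with hD1def
  rw [hus, hvs]
  simp only [mul_one, neg_add_cancel, mul_zero, Finset.sum_const_zero, add_zero]
  rw [div_mul_cancel₀ _ hD₂]
  have key : q * (∑ k, (-((q * u k + (1 - q) * v k) / D₁) * α * S) * u k) +
      (1 - q) * (∑ k, (-((q * u k + (1 - q) * v k) / D₁) * α * S) * v k)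
      = -(α * S) := by
    have h1 : q * (∑ k, (-((q * u k + (1 - q) * v k) / D₁) * α * S) * u k) +
        (1 - q) * (∑ k, (-((q * u k + (1 - q) * v k) / D₁) * α * S) * v k)
        = ∑ k, (-((q * u k + (1 - q) * v k) ^ 2 / D₁) * α * S) := by
      rw [Finset.mul_sum, Finset.mul_sum, ← Finset.sum_add_distrib]
      apply Finset.sum_congr rfl
      intro k _
      ring
    rw [h1, ← Finset.sum_mul, ← Finset.sum_mul]
    have h2 : ∑ i : K, -((q * u i + (1 - q) * v i) ^ 2 / D₁) = -1 := by
      simp only [← neg_div]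
      rw [← Finset.sum_div, Finset.sum_neg_distrib, ← hD1def, neg_div, div_self hD₁']
    rw [h2]; ring
  rw [key]; ring
end

section
/- Let γ > 0, α* > 0 and R, D ≥ 0 be real constants with α* > R + D. Let τ_c, α, w_r, w_d : [0,∞) → ℝ with τ_c, α differentiable, |w_r(t)| ≤ R and |w_d(t)| ≤ D for all t, and suppose the closed-loop learning dynamics hold: τ_c'(t) = −2·α(t)·sgn(τ_c(t)) − w_r(t) + w_d(t) and α'(t) = γ·|τ_c(t)|, where sgn is the standard sign function (sgn(0)=0). Define the Lyapunov function V(t) = ½·τ_c(t)² + (1/γ)·(α(t) − α*)². Then V is differentiable and V'(t) ≤ |τ_c(t)|·(R + D − 2·α*) ≤ 0 for all t; in particular V'(t) < 0 whenever τ_c(t) ≠ 0. -/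
/-- stability of the learning algorithm, Theorem 1: with
`τ_c' = −2α·sgn(τ_c) − w_r + w_d`, `α' = γ·|τ_c|`, bounds `|w_r| ≤ R`,
`|w_d| ≤ D` and `α* > R + D`, the Lyapunov function
`V = ½τ_c² + (1/γ)(α − α*)²` satisfies
`V' ≤ |τ_c|·(R + D − 2α*) ≤ 0`, with strict inequality whenever `τ_c ≠ 0`. -/
theorem learning_algorithm_lyapunov
    (γ αs R D : ℝ) (hγ : 0 < γ) (hαs : 0 < αs) (hR : 0 ≤ R) (hD : 0 ≤ D)
    (hgain : R + D < αs)
    (τc α wr wd : ℝ → ℝ)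
    (hτc_diff : Differentiable ℝ τc) (hα_diff : Differentiable ℝ α)
    (hwr : ∀ t, |wr t| ≤ R) (hwd : ∀ t, |wd t| ≤ D)
    (hτc' : ∀ t, deriv τc t = -2 * α t * Real.sign (τc t) - wr t + wd t)
    (hα' : ∀ t, deriv α t = γ * |τc t|) :
    ∀ t, DifferentiableAt ℝ (fun t => (1 / 2) * (τc t) ^ 2 + (1 / γ) * (α t - αs) ^ 2) t ∧
      deriv (fun t => (1 / 2) * (τc t) ^ 2 + (1 / γ) * (α t - αs) ^ 2) t ≤
        |τc t| * (R + D - 2 * αs) ∧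
      |τc t| * (R + D - 2 * αs) ≤ 0 ∧
      (τc t ≠ 0 →
        deriv (fun t => (1 / 2) * (τc t) ^ 2 + (1 / γ) * (α t - αs) ^ 2) t < 0) := by
  intro t
  have h1 : HasDerivAt τc (deriv τc t) t := (hτc_diff t).hasDerivAt
  have h2 : HasDerivAt α (deriv α t) t := (hα_diff t).hasDerivAt
  have hV : HasDerivAt (fun t => (1 / 2) * (τc t) ^ 2 + (1 / γ) * (α t - αs) ^ 2)
      ((1 / 2) * (2 * τc t ^ 1 * deriv τc t) +
       (1 / γ) * (2 * (α t - αs) ^ 1 * deriv α t)) t := by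
    exact ((h1.pow 2).const_mul (1/2 : ℝ)).add (((h2.sub_const αs).pow 2).const_mul (1/γ))
  have hsgn : τc t * Real.sign (τc t) = |τc t| := by
    rcases lt_trichotomy (τc t) 0 with h | h | h
    · rw [Real.sign_of_neg h, abs_of_neg h]; ring
    · simp [h]
    · rw [Real.sign_of_pos h, abs_of_pos h]; ring
  have hderiv : deriv (fun t => (1 / 2) * (τc t) ^ 2 + (1 / γ) * (α t - αs) ^ 2) t
      = τc t * (wd t - wr t) - 2 * αs * |τc t| := by
    rw [hV.deriv, hτc' t, hα' t]
    field_simp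
    linear_combination (-2*α t) * hsgn
  have hbound : τc t * (wd t - wr t) ≤ |τc t| * (R + D) := by
    calc τc t * (wd t - wr t) ≤ |τc t * (wd t - wr t)| := le_abs_self _
    _ = |τc t| * |wd t - wr t| := abs_mul _ _
    _ ≤ |τc t| * (D + R) := by
        have := abs_sub (wd t) (wr t)
        exact mul_le_mul_of_nonneg_left (le_trans (abs_sub _ _)
          (add_le_add (hwd t) (hwr t))) (abs_nonneg _)
    _ = |τc t| * (R + D) := by ring
  have habs : 0 ≤ |τc t| := abs_nonneg _
  refine ⟨hV.differentiableAt, ?_, ?_, ?_⟩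
  · rw [hderiv]; nlinarith
  · nlinarith
  · intro hne
    have : 0 < |τc t| := abs_pos.mpr hne
    rw [hderiv]; nlinarith
end

section
/- Let c > 0 and let τ : [0,∞) → ℝ be differentiable with τ(0) ≠ 0, and suppose that for every t ≥ 0 with τ(t) ≠ 0 one has τ'(t)·sgn(τ(t)) ≤ −c (equivalently, τ(t)·τ'(t) ≤ −c·|τ(t)|). Then there exists T with 0 < T ≤ |τ(0)|/c such that τ(T) = 0; i.e., τ reaches zero in finite time. -/
/-- finite-time reaching: if `c > 0`, `τ(0) ≠ 0`, `τ` is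
differentiable on `[0,∞)` and `τ·τ' ≤ −c·|τ|` wherever `τ ≠ 0`, then `τ`
reaches zero at some time `T` with `0 < T ≤ |τ(0)|/c`. -/
theorem finite_time_reaching
    (c : ℝ) (hc : 0 < c) (τ : ℝ → ℝ)
    (hτ_diff : ∀ t ≥ (0 : ℝ), DifferentiableAt ℝ τ t)
    (hτ0 : τ 0 ≠ 0)
    (hslide : ∀ t ≥ (0 : ℝ), τ t ≠ 0 → τ t * deriv τ t ≤ -c * |τ t|) :
    ∃ T : ℝ, 0 < T ∧ T ≤ |τ 0| / c ∧ τ T = 0 := by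
  by_contra hcon
  push_neg at hcon
  set T0 := |τ 0| / c with hT0def
  have hT0pos : 0 < T0 := div_pos (abs_pos.mpr hτ0) hc
  have hcT0 : c * T0 = |τ 0| := by
    rw [hT0def]; field_simp [hc.ne']
  have hne : ∀ t ∈ Set.Icc (0:ℝ) T0, τ t ≠ 0 := by
    intro t ht
    rcases eq_or_lt_of_le ht.1 with h0 | h0
    · rw [← h0]; exact hτ0
    · exact hcon t h0 ht.2
  have hcont : ContinuousOn τ (Set.Icc 0 T0) := fun t ht =>
    ((hτ_diff t ht.1).continuousAt).continuousWithinAt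
  have hconv : Convex ℝ (Set.Icc (0:ℝ) T0) := convex_Icc 0 T0
  have hint : interior (Set.Icc (0:ℝ) T0) = Set.Ioo 0 T0 := interior_Icc
  rcases lt_or_gt_of_ne hτ0 with hneg | hpos
  · -- τ 0 < 0 : τ stays negative, deriv ≥ c, so τ T0 ≥ 0, contradiction
    have hnegall : ∀ t ∈ Set.Icc (0:ℝ) T0, τ t < 0 := by
      intro t ht
      rcases (hne t ht).lt_or_gt with hlt | hlt
      · exact hlt
      · exfalso
        have h0mem : (0:ℝ) ∈ Set.Icc (τ 0) (τ t) := ⟨hneg.le, hlt.le⟩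
        obtain ⟨s, hs, hs0⟩ := intermediate_value_Icc ht.1
          (hcont.mono (Set.Icc_subset_Icc_right ht.2)) h0mem
        exact hne s ⟨hs.1, hs.2.trans ht.2⟩ hs0
    have hmono : MonotoneOn (fun t => τ t - c * t) (Set.Icc 0 T0) := by
      apply monotoneOn_of_deriv_nonneg hconv
      · exact (hcont.sub (continuousOn_const.mul continuousOn_id)).congr (fun x _ => rfl)
      · intro x hx
        rw [hint] at hx
        exact ((hτ_diff x hx.1.le).sub (by fun_prop)).differentiableWithinAt
      · intro x hx
        rw [hint] at hx
        have hd : DifferentiableAt ℝ τ x := hτ_diff x hx.1.le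
        have hgd : DifferentiableAt ℝ (fun t : ℝ => c * t) x := by fun_prop
        have hg : deriv (fun t : ℝ => c * t) x = c := by
          simpa using ((hasDerivAt_id x).const_mul c).deriv
        have : deriv (fun t => τ t - c * t) x = deriv τ x - c := by
          rw [deriv_fun_sub hd hgd, hg]
        rw [this]
        have hτx : τ x < 0 := hnegall x ⟨hx.1.le, hx.2.le⟩
        have hs := hslide x hx.1.le (ne_of_lt hτx)
        rw [abs_of_neg hτx] at hs
        nlinarith
    have := hmono (Set.left_mem_Icc.mpr hT0pos.le) (Set.right_mem_Icc.mpr hT0pos.le) hT0pos.le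
    simp only at this
    have hT0neg : τ T0 < 0 := hnegall T0 (Set.right_mem_Icc.mpr hT0pos.le)
    rw [abs_of_neg hneg] at hcT0
    nlinarith
  · -- τ 0 > 0 : τ stays positive, deriv ≤ -c, so τ T0 ≤ 0, contradiction
    have hposall : ∀ t ∈ Set.Icc (0:ℝ) T0, 0 < τ t := by
      intro t ht
      rcases (hne t ht).lt_or_gt with hlt | hlt
      · exfalso
        have h0mem : (0:ℝ) ∈ Set.Icc (τ t) (τ 0) := ⟨hlt.le, hpos.le⟩
        obtain ⟨s, hs, hs0⟩ := intermediate_value_Icc' ht.1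
          (hcont.mono (Set.Icc_subset_Icc_right ht.2)) h0mem
        exact hne s ⟨hs.1, hs.2.trans ht.2⟩ hs0
      · exact hlt
    have hanti : AntitoneOn (fun t => τ t + c * t) (Set.Icc 0 T0) := by
      apply antitoneOn_of_deriv_nonpos hconv
      · exact (hcont.add (continuousOn_const.mul continuousOn_id)).congr (fun x _ => rfl)
      · intro x hx
        rw [hint] at hx
        exact ((hτ_diff x hx.1.le).add (by fun_prop)).differentiableWithinAt
      · intro x hx
        rw [hint] at hx
        have hd : DifferentiableAt ℝ τ x := hτ_diff x hx.1.le
        have hgd : DifferentiableAt ℝ (fun t : ℝ => c * t) x := by fun_prop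
        have hg : deriv (fun t : ℝ => c * t) x = c := by
          simpa using ((hasDerivAt_id x).const_mul c).deriv
        have : deriv (fun t => τ t + c * t) x = deriv τ x + c := by
          rw [deriv_fun_add hd hgd, hg]
        rw [this]
        have hτx : 0 < τ x := hposall x ⟨hx.1.le, hx.2.le⟩
        have hs := hslide x hx.1.le (ne_of_gt hτx)
        rw [abs_of_pos hτx] at hs
        nlinarith
    have := hanti (Set.left_mem_Icc.mpr hT0pos.le) (Set.right_mem_Icc.mpr hT0pos.le) hT0pos.le
    simp only at this
    have hT0pos' : 0 < τ T0 := hposall T0 (Set.right_mem_Icc.mpr hT0pos.le)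
    rw [abs_of_pos hpos] at hcT0
    nlinarith
end

section
/- Let a, b, r > 0 be real constants, let d, d̂_SL, d̂_BN, τ_n : ℝ → ℝ be functions with d, d̂_SL differentiable and d̂_BN twice differentiable, and define the disturbance error e_d(t) = d(t) − d̂_SL(t). Suppose the BNDO rate relation d̂_BN'(t) = a·e_d(t) holds and the SLDO estimation law holds: d̂_SL'(t) = (1 + r/a)·d̂_BN'(t) + (b/a)·d̂_BN''(t) − τ_n(t). Then e_d is differentiable and satisfies the SLDO error dynamics (1 + b)·e_d'(t) = −(a + r)·e_d(t) + τ_n(t) + d'(t), i.e. e_d'(t) = (−(a+r)·e_d(t) + τ_n(t) + d'(t)) / (1 + b). -/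
/-- SLDO error dynamics: with `a, b, r > 0`, BNDO rate relation
`d̂_BN' = a·e_d` (where `e_d = d − d̂_SL`) and the SLDO estimation law
`d̂_SL' = (1 + r/a)·d̂_BN' + (b/a)·d̂_BN'' − τ_n`, the error satisfies
`(1 + b)·e_d' = −(a + r)·e_d + τ_n + d'`. -/
theorem sldo_error_dynamics
    (a b r : ℝ) (ha : 0 < a) (hb : 0 < b) (hr : 0 < r)
    (d dSL dBN τn : ℝ → ℝ)
    (hd : Differentiable ℝ d) (hdSL : Differentiable ℝ dSL)
    (hdBN : Differentiable ℝ dBN) (hdBN' : Differentiable ℝ (deriv dBN))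
    (hBN : ∀ t, deriv dBN t = a * (d t - dSL t))
    (hSL : ∀ t, deriv dSL t =
      (1 + r / a) * deriv dBN t + (b / a) * deriv (deriv dBN) t - τn t) :
    Differentiable ℝ (fun t => d t - dSL t) ∧
    (∀ t, (1 + b) * deriv (fun t => d t - dSL t) t =
        -(a + r) * (d t - dSL t) + τn t + deriv d t) ∧
    (∀ t, deriv (fun t => d t - dSL t) t =
        (-(a + r) * (d t - dSL t) + τn t + deriv d t) / (1 + b)) := by
  have he : Differentiable ℝ (fun t => d t - dSL t) := hd.sub hdSL
  have hde : ∀ t, deriv (fun t => d t - dSL t) t = deriv d t - deriv dSL t := by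
    intro t
    exact deriv_sub (hd t) (hdSL t)
  have hfun : deriv dBN = fun t => a * (d t - dSL t) := funext hBN
  have h2 : ∀ t, deriv (deriv dBN) t = a * (deriv d t - deriv dSL t) := by
    intro t
    rw [hfun]
    rw [deriv_const_mul (d := fun y => d y - dSL y) _ ((hd t).sub (hdSL t)), deriv_fun_sub (hd t) (hdSL t)]
  have ha' : a ≠ 0 := ne_of_gt ha
  have key : ∀ t, (1 + b) * deriv (fun t => d t - dSL t) t =
      -(a + r) * (d t - dSL t) + τn t + deriv d t := by
    intro t
    have hS := hSL t
    rw [hBN t, h2 t] at hS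
    rw [hde t]
    field_simp at hS
    nlinarith [hS]
  refine ⟨he, key, fun t => ?_⟩
  have h1b : (1 + b) ≠ 0 := by positivity
  field_simp
  linarith [key t]
end

section
/- Let a, b, γ > 0 be real constants, r = a/b, and let D* ≥ 0, α* ∈ ℝ with α* > D*. Let e_d : [0,∞) → ℝ be twice differentiable, α : [0,∞) → ℝ differentiable, and w : [0,∞) → ℝ with |w(t)| ≤ D* for all t. Define the sliding surface s(t) = b·e_d'(t) + a·e_d(t), and suppose the closed-loop SLDO error dynamics hold: e_d''(t) = (−(a + r)·e_d'(t) − 2·α(t)·sgn(s(t)) + w(t)) / (1 + b), together with the learning-rate adaptation α'(t) = γ·|s(t)|, where sgn is the standard sign function (sgn(0)=0). Define the Lyapunov function V(t) = ½·s(t)² + (b/(γ·(1+b)))·(α(t) − α*)². Then V is differentiable and V'(t) ≤ |s(t)|·(b/(1+b))·(D* − 2·α*) ≤ 0 for all t; in particular V'(t) < 0 whenever s(t) ≠ 0. -/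
/-- stability of the SLDO, Theorem 2: with `a, b, γ > 0`,
`r = a/b`, disturbance acceleration bound `|w| ≤ D*`, `α* > D*`, sliding
surface `s = b·e_d' + a·e_d`, closed-loop error dynamics
`e_d'' = (−(a+r)e_d' − 2α·sgn(s) + w)/(1+b)` and adaptation `α' = γ|s|`, the
Lyapunov function `V = ½s² + (b/(γ(1+b)))(α − α*)²` satisfies
`V' ≤ |s|·(b/(1+b))·(D* − 2α*) ≤ 0`, strictly whenever `s ≠ 0`. -/
theorem sldo_lyapunov
    (a b γ Ds αs : ℝ) (ha : 0 < a) (hb : 0 < b) (hγ : 0 < γ)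
    (r : ℝ) (hr : r = a / b) (hDs : 0 ≤ Ds) (hαs : Ds < αs)
    (ed α w : ℝ → ℝ)
    (hed : Differentiable ℝ ed) (hed' : Differentiable ℝ (deriv ed))
    (hα : Differentiable ℝ α)
    (hw : ∀ t, |w t| ≤ Ds)
    (hdyn : ∀ t, deriv (deriv ed) t =
      (-(a + r) * deriv ed t -
        2 * α t * Real.sign (b * deriv ed t + a * ed t) + w t) / (1 + b))
    (hα' : ∀ t, deriv α t = γ * |b * deriv ed t + a * ed t|) :
    ∀ t, DifferentiableAt ℝ
        (fun t => (1 / 2) * (b * deriv ed t + a * ed t) ^ 2 +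
          (b / (γ * (1 + b))) * (α t - αs) ^ 2) t ∧
      deriv (fun t => (1 / 2) * (b * deriv ed t + a * ed t) ^ 2 +
          (b / (γ * (1 + b))) * (α t - αs) ^ 2) t ≤
        |b * deriv ed t + a * ed t| * (b / (1 + b)) * (Ds - 2 * αs) ∧
      |b * deriv ed t + a * ed t| * (b / (1 + b)) * (Ds - 2 * αs) ≤ 0 ∧
      (b * deriv ed t + a * ed t ≠ 0 →
        deriv (fun t => (1 / 2) * (b * deriv ed t + a * ed t) ^ 2 +
          (b / (γ * (1 + b))) * (α t - αs) ^ 2) t < 0) := by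
  intro t
  have hb1 : (0:ℝ) < 1 + b := by linarith
  -- derivative of the sliding surface component
  have hS : HasDerivAt (fun t => b * deriv ed t + a * ed t)
      (b * deriv (deriv ed) t + a * deriv ed t) t :=
    ((hed' t).hasDerivAt.const_mul b).add ((hed t).hasDerivAt.const_mul a)
  set S : ℝ := b * deriv ed t + a * ed t with hSdef
  set c : ℝ := b / (γ * (1 + b)) with hcdef
  have hV : HasDerivAt (fun t => (1 / 2) * (b * deriv ed t + a * ed t) ^ 2 +
      c * (α t - αs) ^ 2)
      ((1/2) * ((2:ℕ) * S ^ 1 * (b * deriv (deriv ed) t + a * deriv ed t)) +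
        c * ((2:ℕ) * (α t - αs) ^ 1 * deriv α t)) t := by
    exact ((hS.pow 2).const_mul (1/2)).add
      ((((hα t).hasDerivAt.sub_const αs).pow 2).const_mul c)
  have hdV : deriv (fun t => (1 / 2) * (b * deriv ed t + a * ed t) ^ 2 +
      c * (α t - αs) ^ 2) t =
      S * (b * deriv (deriv ed) t + a * deriv ed t) +
        2 * c * (α t - αs) * deriv α t := by
    rw [hV.deriv]; ring
  -- simplify b * ed'' + a * ed'
  have hbne : b ≠ 0 := ne_of_gt hb
  have h1bne : (1:ℝ) + b ≠ 0 := ne_of_gt hb1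
  have hγne : γ ≠ 0 := ne_of_gt hγ
  have hbr : b * r = a := by rw [hr]; field_simp
  have hkey : b * deriv (deriv ed) t + a * deriv ed t =
      b * (w t - 2 * α t * Real.sign S) / (1 + b) := by
    rw [hdyn t]
    field_simp
    ring_nf
    rw [show b * r = a from hbr]
    ring
  have hcγ : 2 * c * γ = 2 * (b / (1 + b)) := by
    rw [hcdef]; field_simp
  have hdV2 : deriv (fun t => (1 / 2) * (b * deriv ed t + a * ed t) ^ 2 +
      c * (α t - αs) ^ 2) t =
      (b / (1 + b)) * (S * w t - 2 * α t * (S * Real.sign S) + 2 * (α t - αs) * |S|) := by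
    rw [hdV, hkey, hα' t, ← hSdef, hcdef]
    field_simp
  have hsgn : S * Real.sign S = |S| := by
    rcases lt_trichotomy S 0 with h | h | h
    · rw [Real.sign_of_neg h, abs_of_neg h]; ring
    · simp [h]
    · rw [Real.sign_of_pos h, abs_of_pos h]; ring
  have hdV3 : deriv (fun t => (1 / 2) * (b * deriv ed t + a * ed t) ^ 2 +
      c * (α t - αs) ^ 2) t =
      (b / (1 + b)) * (S * w t - 2 * αs * |S|) := by
    rw [hdV2, hsgn]; ring
  have hfrac : (0:ℝ) < b / (1 + b) := div_pos hb hb1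
  have hSw : S * w t ≤ |S| * Ds := by
    calc S * w t ≤ |S * w t| := le_abs_self _
    _ = |S| * |w t| := abs_mul _ _
    _ ≤ |S| * Ds := by
        exact mul_le_mul_of_nonneg_left (hw t) (abs_nonneg _)
  have hbound : deriv (fun t => (1 / 2) * (b * deriv ed t + a * ed t) ^ 2 +
      c * (α t - αs) ^ 2) t ≤ |S| * (b / (1 + b)) * (Ds - 2 * αs) := by
    rw [hdV3]
    have : (b / (1 + b)) * (S * w t - 2 * αs * |S|) ≤
        (b / (1 + b)) * (|S| * Ds - 2 * αs * |S|) := by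
      apply mul_le_mul_of_nonneg_left _ (le_of_lt hfrac)
      linarith
    calc (b / (1 + b)) * (S * w t - 2 * αs * |S|)
        ≤ (b / (1 + b)) * (|S| * Ds - 2 * αs * |S|) := this
      _ = |S| * (b / (1 + b)) * (Ds - 2 * αs) := by ring
  have hneg : Ds - 2 * αs < 0 := by linarith
  refine ⟨hV.differentiableAt, hbound, ?_, ?_⟩
  · have : |S| * (b / (1 + b)) ≥ 0 := mul_nonneg (abs_nonneg _) (le_of_lt hfrac)
    nlinarith
  · intro hS0
    have habs : 0 < |S| := abs_pos.mpr hS0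
    have : |S| * (b / (1 + b)) * (Ds - 2 * αs) < 0 := by
      apply mul_neg_of_pos_of_neg (mul_pos habs hfrac) hneg
    linarith
end
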